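/- For a t-spread monomial u = x_{i_1}···x_{i_d} in M_{n,d,t}, the cardinality of the initial t-lex segment L_t{u} = {w ∈ M_{n,d,t} : w ≥_slex u} equals Σ_{s_1=1}^{i_1-1} C(n-(d-1)(t-1)-s_1, d-1) + Σ_{s_2=1}^{i_2-i_1-t} C(n-(d-1)(t-1)-i_1-s_2, d-2) + ··· + Σ_{s_k=1}^{i_k-i_{k-1}-t} C(n-(d-k+1)(t-1)-i_{k-1}-s_k, d-k) + ··· + Σ_{s_d=1}^{i_d-i_{d-1}-t} C(n-(t-1)-i_{d-1}-s_d, 0) + 1. -/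
import Mathlib


/-- A sequence `i : Fin d → ℕ` represents a `t`-spread monomial in `n` variables. -/
def IsTSpread (n t : ℕ) {d : ℕ} (i : Fin d → ℕ) : Prop :=
  (∀ k, 1 ≤ i k ∧ i k ≤ n) ∧
  ∀ (j : ℕ) (h : j + 1 < d), i ⟨j, Nat.lt_of_succ_lt h⟩ + t ≤ i ⟨j + 1, h⟩

/-- `SlexGT u v` means `u >_slex v`. -/
def SlexGT {d : ℕ} (u v : Fin d → ℕ) : Prop :=
  ∃ s : Fin d, (∀ r < s, u r = v r) ∧ u s < v s

/-- generalized t-spread with lower bound `a` -/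
def TS (n t a : ℕ) {d : ℕ} (w : Fin d → ℕ) : Prop :=
  (∀ k, a ≤ w k ∧ w k ≤ n) ∧
  ∀ (j : ℕ) (h : j + 1 < d), w ⟨j, Nat.lt_of_succ_lt h⟩ + t ≤ w ⟨j + 1, h⟩

lemma ts_finite {n d : ℕ} (P : (Fin d → ℕ) → Prop) (hP : ∀ w, P w → ∀ k, w k ≤ n) :
    Finite {w : Fin d → ℕ // P w} := by
  apply Finite.of_injective
    (fun w : {w : Fin d → ℕ // P w} => fun k => (⟨w.1 k, Nat.lt_succ_of_le (hP w.1 w.2 k)⟩ : Fin (n+1)))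
  intro a b h
  apply Subtype.ext; funext k
  exact congrArg Fin.val (congrFun h k)

instance ts_finite' {n t a d : ℕ} : Finite {w : Fin d → ℕ // TS n t a w} :=
  ts_finite _ (fun w hw k => (hw.1 k).2)

lemma spread_le {t d : ℕ} {w : Fin d → ℕ}
    (hw : ∀ (j : ℕ) (h : j + 1 < d), w ⟨j, Nat.lt_of_succ_lt h⟩ + t ≤ w ⟨j + 1, h⟩) :
    ∀ (j k : ℕ) (hj : j < d) (hk : k < d), j < k → w ⟨j, hj⟩ + t ≤ w ⟨k, hk⟩ := by
  intro j k
  induction k with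
  | zero => omega
  | succ k ih =>
    intro hj hk hjk
    rcases Nat.lt_or_ge j k with h | h
    · exact le_trans (ih hj (Nat.lt_of_succ_lt hk) h) (by
        have := hw k hk; omega)
    · have : j = k := by omega
      subst this
      exact hw j hk

lemma ts_tail {n t a d : ℕ} {w : Fin (d+1) → ℕ} (hw : TS n t a w) :
    TS n t (w 0 + t) (Fin.tail w) := by
  obtain ⟨hr, hs⟩ := hw
  refine ⟨fun k => ⟨?_, (hr k.succ).2⟩, fun j h => hs (j+1) (by omega)⟩
  show w 0 + t ≤ w k.succ
  have : (0 : Fin (d+1)) = ⟨0, by omega⟩ := rfl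
  rw [this]
  have hks : (k.succ : Fin (d+1)) = ⟨(k : ℕ) + 1, by omega⟩ := rfl
  rw [hks]
  exact spread_le hs 0 ((k:ℕ)+1) (by omega) (by omega) (by omega)

lemma ts_cons {n t a d : ℕ} {v : ℕ} (hav : a ≤ v) (hvn : v ≤ n) {w : Fin d → ℕ}
    (hw : TS n t (v + t) w) : TS n t a (Fin.cons v w) := by
  obtain ⟨hr, hs⟩ := hw
  constructor
  · intro k
    refine Fin.cases ⟨hav, hvn⟩ (fun k => ⟨le_trans (by omega) (hr k).1, (hr k).2⟩) k
  · intro j h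
    match j with
    | 0 =>
      have h1 : (⟨0+1, h⟩ : Fin (d+1)) = Fin.succ ⟨0, by omega⟩ := rfl
      have h0 : (⟨0, Nat.lt_of_succ_lt h⟩ : Fin (d+1)) = (0 : Fin (d+1)) := rfl
      rw [h1, h0, Fin.cons_succ, Fin.cons_zero]
      exact le_trans (by omega) (hr ⟨0, by omega⟩).1
    | j + 1 =>
      have h1 : (⟨j+1, Nat.lt_of_succ_lt h⟩ : Fin (d+1)) = Fin.succ ⟨j, by omega⟩ := rfl
      have h2 : (⟨j+2, h⟩ : Fin (d+1)) = Fin.succ ⟨j+1, by omega⟩ := rfl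
      rw [h1, h2, Fin.cons_succ, Fin.cons_succ]
      exact hs j (by omega)

/-- hockey stick over an Icc, exact top -/
lemma hockey_exact (a N m : ℕ) :
    ∑ v ∈ Finset.Icc a N, Nat.choose (N - v) m = Nat.choose (N + 1 - a) (m+1) := by
  rcases le_or_gt a N with h | h
  · -- reindex to range
    have key : ∀ K, ∑ j ∈ Finset.range K, Nat.choose j m = Nat.choose K (m+1) := by
      intro K
      induction K with
      | zero => simp
      | succ K ih => rw [Finset.sum_range_succ, ih, Nat.choose_succ_succ']; omega
    rw [← key (N + 1 - a)]
    apply Finset.sum_nbij' (fun v => N - v) (fun j => N - j)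
    · intro v hv; simp only [Finset.mem_Icc] at hv; simp only [Finset.mem_range]; omega
    · intro j hj; simp only [Finset.mem_range] at hj; simp only [Finset.mem_Icc]; omega
    · intro v hv; simp only [Finset.mem_Icc] at hv; omega
    · intro j hj; simp only [Finset.mem_range] at hj; omega
    · intro v hv; rfl
  · rw [Finset.Icc_eq_empty (by omega), Finset.sum_empty]
    have : N + 1 - a = 0 := by omega
    rw [this]
    simp

lemma hockey (a n N m : ℕ) (hN : N ≤ n) (hm : 1 ≤ m ∨ N = n) :
    ∑ v ∈ Finset.Icc a n, Nat.choose (N - v) m = Nat.choose (N + 1 - a) (m+1) := by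
  rcases hm with hm | rfl
  · rw [← hockey_exact a N m]
    symm
    apply Finset.sum_subset
    · intro v hv; simp only [Finset.mem_Icc] at *; omega
    · intro v hv hv'
      simp only [Finset.mem_Icc] at hv hv'
      have : N - v = 0 := by omega
      rw [this]
      exact Nat.choose_eq_zero_of_lt (by omega)
  · exact hockey_exact a N m

lemma top_arith (n v t d : ℕ) (ht : 1 ≤ t) :
    Nat.choose (n + 1 - (v + t) - (d-1)*(t-1)) d = Nat.choose (n - d*(t-1) - v) d := by
  match d with
  | 0 => simp
  | d+1 =>
    congr 1
    rw [Nat.succ_mul, Nat.add_sub_cancel]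
    generalize d*(t-1) = p
    omega

lemma nat_card_sigma {ι : Type*} [Fintype ι] (f : ι → Type*) [∀ x, Finite (f x)] :
    Nat.card (Σ x, f x) = ∑ x, Nat.card (f x) := by
  have : ∀ x, Fintype (f x) := fun x => Fintype.ofFinite _
  classical
  simp [Nat.card_eq_fintype_card, Fintype.card_sigma]


lemma card_ts (n t : ℕ) (ht : 1 ≤ t) :
    ∀ (d a : ℕ), 1 ≤ a →
      Nat.card {w : Fin d → ℕ // TS n t a w} =
        Nat.choose (n + 1 - a - (d-1)*(t-1)) d := by
  intro d
  induction d with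
  | zero =>
    intro a ha
    haveI : Unique {w : Fin 0 → ℕ // TS n t a w} := by
      refine ⟨⟨⟨fun k => k.elim0, ⟨fun k => k.elim0, fun j h => by omega⟩⟩⟩, ?_⟩
      rintro ⟨w, hw⟩
      apply Subtype.ext; funext k; exact k.elim0
    rw [Nat.card_unique]
    simp
  | succ d ih =>
    intro a ha
    have key : Nat.card {w : Fin (d+1) → ℕ // TS n t a w} =
        Nat.card (Σ v : (Finset.Icc a n : Finset ℕ),
          {w : Fin d → ℕ // TS n t ((v : ℕ) + t) w}) := by
      symm
      apply Nat.card_eq_of_bijective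
        (fun p => ⟨Fin.cons (p.1 : ℕ) p.2.1,
          ts_cons (Finset.mem_Icc.mp p.1.2).1 (Finset.mem_Icc.mp p.1.2).2 p.2.2⟩)
      constructor
      · rintro ⟨⟨v, hv⟩, ⟨w, hw⟩⟩ ⟨⟨v', hv'⟩, ⟨w', hw'⟩⟩ h
        have h' := congrArg Subtype.val h
        simp only at h'
        have hv0 : v = v' := by
          have := congrFun h' 0
          simpa using this
        subst hv0
        have hww : w = w' := by
          funext k
          have := congrFun h' k.succ
          simpa using this
        subst hww
        rfl
      · rintro ⟨w, hw⟩
        refine ⟨⟨⟨w 0, Finset.mem_Icc.mpr ⟨(hw.1 0).1, (hw.1 0).2⟩⟩, ⟨Fin.tail w, ts_tail hw⟩⟩, ?_⟩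
        apply Subtype.ext
        exact Fin.cons_self_tail w
    rw [key, nat_card_sigma, Finset.sum_coe_sort (Finset.Icc a n)
      (fun v => Nat.card {w : Fin d → ℕ // TS n t (v + t) w})]
    have step : ∀ v ∈ Finset.Icc a n,
        Nat.card {w : Fin d → ℕ // TS n t (v + t) w} =
          Nat.choose (n - d*(t-1) - v) d := by
      intro v hv
      rw [ih (v + t) (by omega), top_arith n v t d ht]
    have hdisj : 1 ≤ d ∨ n - d*(t-1) = n := by
      rcases Nat.eq_zero_or_pos d with h | h
      · right; simp [h]
      · left; omega
    rw [Finset.sum_congr rfl step, hockey a n (n - d*(t-1)) d (by omega) hdisj]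
    congr 1
    rw [Nat.add_sub_cancel]
    generalize d*(t-1) = p
    omega

def SlexGT' {d : ℕ} (u v : Fin d → ℕ) : Prop :=
  ∃ s : Fin d, (∀ r < s, u r = v r) ∧ u s < v s

def Fc (n t : ℕ) : ℕ → ℕ → (ℕ → ℕ) → ℕ
  | 0, _, _ => 1
  | d+1, a, j => (∑ v ∈ Finset.Icc a (j 0 - 1), Nat.choose (n - d*(t-1) - v) d)
      + Fc n t d (j 0 + t) (fun k => j (k+1))

lemma tail_lam {d : ℕ} (j : ℕ → ℕ) :
    Fin.tail (fun k : Fin (d+1) => j (k : ℕ)) = fun k : Fin d => j ((k : ℕ) + 1) := by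
  funext k
  simp [Fin.tail]

lemma card_L (n t : ℕ) (ht : 1 ≤ t) :
    ∀ (d a : ℕ) (j : ℕ → ℕ), 1 ≤ a →
      TS n t a (fun k : Fin d => j (k : ℕ)) →
      Nat.card {w : Fin d → ℕ //
          TS n t a w ∧ (w = (fun k : Fin d => j (k : ℕ)) ∨ SlexGT' w (fun k : Fin d => j (k : ℕ)))} =
        Fc n t d a j := by
  intro d
  induction d with
  | zero =>
    intro a j ha hj
    haveI : Unique {w : Fin 0 → ℕ //
        TS n t a w ∧ (w = (fun k : Fin 0 => j (k : ℕ)) ∨ SlexGT' w (fun k : Fin 0 => j (k : ℕ)))} := by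
      refine ⟨⟨⟨fun k : Fin 0 => j (k : ℕ), hj, Or.inl rfl⟩⟩, ?_⟩
      rintro ⟨w, hw⟩
      apply Subtype.ext; funext k; exact k.elim0
    rw [Nat.card_unique]
    rfl
  | succ d ih =>
    intro a j ha hj
    have hj0a : a ≤ j 0 := (hj.1 0).1
    have hj0n : j 0 ≤ n := (hj.1 0).2
    have htail : TS n t (j 0 + t) (fun k : Fin d => j ((k : ℕ) + 1)) := by
      have := ts_tail (w := fun k : Fin (d+1) => j (k : ℕ)) hj
      rwa [tail_lam] at this
    set I : Fin (d+1) → ℕ := fun k : Fin (d+1) => j (k : ℕ) with hI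
    set Itail : Fin d → ℕ := fun k : Fin d => j ((k : ℕ) + 1) with hItail
    have hI0 : I 0 = j 0 := by simp [hI]
    have hIsucc : ∀ r : Fin d, I r.succ = Itail r := by
      intro r; simp [hI, hItail]
    have key : Nat.card {w : Fin (d+1) → ℕ // TS n t a w ∧ (w = I ∨ SlexGT' w I)} =
        Nat.card ((Σ v : (Finset.Icc a (j 0 - 1) : Finset ℕ),
            {w : Fin d → ℕ // TS n t ((v : ℕ) + t) w}) ⊕
          {w : Fin d → ℕ // TS n t (j 0 + t) w ∧ (w = Itail ∨ SlexGT' w Itail)}) := by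
      symm
      have consTS : ∀ (v : ℕ), v ∈ Finset.Icc a (j 0 - 1) → ∀ (w : Fin d → ℕ),
          TS n t (v + t) w → TS n t a (Fin.cons v w) := by
        intro v hv w hw
        have h1 := (Finset.mem_Icc.mp hv).1
        have h2 := (Finset.mem_Icc.mp hv).2
        exact ts_cons h1 (by omega) hw
      have hrel1 : ∀ (v : ℕ), v ∈ Finset.Icc a (j 0 - 1) → ∀ (w : Fin d → ℕ),
          Fin.cons v w = I ∨ SlexGT' (Fin.cons v w) I := by
        intro v hv w
        right
        refine ⟨0, fun r hr => absurd hr (by simp [Fin.lt_def]), ?_⟩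
        rw [Fin.cons_zero, hI0]
        have h1 := (Finset.mem_Icc.mp hv).1
        have h2 := (Finset.mem_Icc.mp hv).2
        omega
      have hrel2 : ∀ (w : Fin d → ℕ), (w = Itail ∨ SlexGT' w Itail) →
          (Fin.cons (j 0) w = I ∨ SlexGT' (Fin.cons (j 0) w) I) := by
        intro w hrel
        rcases hrel with hrel | ⟨s, agr, lt⟩
        · left
          subst hrel
          funext k
          rcases Fin.eq_zero_or_eq_succ k with rfl | ⟨k', rfl⟩
          · rw [Fin.cons_zero, hI0]
          · rw [Fin.cons_succ, hIsucc]
        · right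
          refine ⟨s.succ, ?_, ?_⟩
          · intro r hr
            rcases Fin.eq_zero_or_eq_succ r with rfl | ⟨r', rfl⟩
            · rw [Fin.cons_zero, hI0]
            · rw [Fin.cons_succ, hIsucc]
              apply agr
              rw [Fin.lt_def] at hr ⊢
              simpa using hr
          · rw [Fin.cons_succ, hIsucc]
            exact lt
      apply Nat.card_eq_of_bijective (fun p =>
        Sum.elim
          (fun q : (Σ v : (Finset.Icc a (j 0 - 1) : Finset ℕ),
              {w : Fin d → ℕ // TS n t ((v : ℕ) + t) w}) =>
            (⟨Fin.cons (q.1 : ℕ) q.2.1, consTS _ q.1.2 _ q.2.2, hrel1 _ q.1.2 q.2.1⟩ :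
              {w : Fin (d+1) → ℕ // TS n t a w ∧ (w = I ∨ SlexGT' w I)}))
          (fun q : {w : Fin d → ℕ // TS n t (j 0 + t) w ∧ (w = Itail ∨ SlexGT' w Itail)} =>
            ⟨Fin.cons (j 0) q.1, ts_cons hj0a hj0n q.2.1, hrel2 q.1 q.2.2⟩) p)
      constructor
      · rintro (⟨⟨v, hv⟩, ⟨w, hw⟩⟩ | ⟨w, hw, hrel⟩) (⟨⟨v', hv'⟩, ⟨w', hw'⟩⟩ | ⟨w', hw', hrel'⟩) h
        · have h' := congrArg Subtype.val h
          simp only [Sum.elim_inl] at h'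
          have hv0 : v = v' := by simpa using congrFun h' 0
          subst hv0
          have hww : w = w' := by
            funext k; simpa using congrFun h' k.succ
          subst hww; rfl
        · exfalso
          have h' := congrArg Subtype.val h
          simp only [Sum.elim_inl, Sum.elim_inr] at h'
          have h0 : v = j 0 := by simpa using congrFun h' 0
          have := Finset.mem_Icc.mp hv
          omega
        · exfalso
          have h' := congrArg Subtype.val h
          simp only [Sum.elim_inl, Sum.elim_inr] at h'
          have h0 : j 0 = v' := by simpa using congrFun h' 0
          have := Finset.mem_Icc.mp hv'
          omega
        · have h' := congrArg Subtype.val h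
          simp only [Sum.elim_inr] at h'
          have hww : w = w' := by
            funext k; simpa using congrFun h' k.succ
          subst hww; rfl
      · rintro ⟨w, hw, hrel⟩
        have hw0 : w 0 ≤ j 0 := by
          rcases hrel with hrel | ⟨s, agr, lt⟩
          · rw [hrel, hI0]
          · rcases Nat.eq_zero_or_pos (s : ℕ) with hs | hs
            · have hlt : w s < I s := lt
              have hs0 : s = 0 := by
                apply Fin.ext; simpa using hs
              subst hs0
              rw [hI0] at hlt
              omega
            · have h0 : w 0 = I 0 := agr 0 (by rw [Fin.lt_def]; simpa using hs)
              rw [hI0] at h0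
              omega
        rcases Nat.lt_or_ge (w 0) (j 0) with hlt | hge
        · refine ⟨Sum.inl ⟨⟨w 0, Finset.mem_Icc.mpr ⟨(hw.1 0).1, by omega⟩⟩,
            ⟨Fin.tail w, ts_tail hw⟩⟩, ?_⟩
          apply Subtype.ext
          exact Fin.cons_self_tail w
        · have heq : w 0 = j 0 := by omega
          have htailTS : TS n t (j 0 + t) (Fin.tail w) := by
            have := ts_tail hw
            rwa [heq] at this
          have htailrel : Fin.tail w = Itail ∨ SlexGT' (Fin.tail w) Itail := by
            rcases hrel with hrel | ⟨s, agr, lt⟩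
            · left
              rw [hrel, hI, tail_lam]
            · right
              have hsne : s ≠ 0 := by
                intro h0
                subst h0
                rw [hI0] at lt
                omega
              obtain ⟨s', rfl⟩ := Fin.eq_succ_of_ne_zero hsne
              refine ⟨s', fun r hr => ?_, ?_⟩
              · have h1 := agr r.succ (by
                  rw [Fin.lt_def] at hr ⊢
                  simpa using hr)
                rw [hIsucc] at h1
                exact h1
              · have h1 : w s'.succ < I s'.succ := lt
                rw [hIsucc] at h1
                exact h1
          refine ⟨Sum.inr ⟨Fin.tail w, htailTS, htailrel⟩, ?_⟩
          apply Subtype.ext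
          show Fin.cons (j 0) (Fin.tail w) = w
          rw [← heq]
          exact Fin.cons_self_tail w
    haveI : Finite {w : Fin d → ℕ // TS n t (j 0 + t) w ∧ (w = Itail ∨ SlexGT' w Itail)} :=
      ts_finite _ (fun w hw k => (hw.1.1 k).2)
    rw [key, Nat.card_sum, nat_card_sigma,
      Finset.sum_coe_sort (Finset.Icc a (j 0 - 1))
        (fun v => Nat.card {w : Fin d → ℕ // TS n t (v + t) w})]
    have hihts : TS n t (j 0 + t) (fun k : Fin d => (fun m => j (m+1)) (k : ℕ)) := htail
    rw [ih (j 0 + t) (fun k => j (k+1)) (by omega) hihts]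
    have hFc : Fc n t (d+1) a j =
        (∑ v ∈ Finset.Icc a (j 0 - 1), Nat.choose (n - d*(t-1) - v) d)
          + Fc n t d (j 0 + t) (fun k => j (k+1)) := rfl
    rw [hFc]
    congr 1
    apply Finset.sum_congr rfl
    intro v hv
    have hm := Finset.mem_Icc.mp hv
    rw [card_ts n t ht d (v + t) (by omega), top_arith n v t d ht]

lemma Fc_closed (n t : ℕ) : ∀ (d a : ℕ) (j : ℕ → ℕ),
    Fc n t d a j = (∑ k ∈ Finset.range d,
      ∑ v ∈ Finset.Icc (if k = 0 then a else j (k-1) + t) (j k - 1),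
        Nat.choose (n - (d-1-k)*(t-1) - v) (d-1-k)) + 1 := by
  intro d
  induction d with
  | zero => intro a j; simp [Fc]
  | succ d ih =>
    intro a j
    have hstep : Fc n t (d+1) a j =
        (∑ v ∈ Finset.Icc a (j 0 - 1), Nat.choose (n - d*(t-1) - v) d)
          + Fc n t d (j 0 + t) (fun k => j (k+1)) := rfl
    rw [hstep, ih, Finset.sum_range_succ']
    have hf0 : (∑ v ∈ Finset.Icc (if 0 = 0 then a else j (0-1) + t) (j 0 - 1),
        Nat.choose (n - (d+1-1-0)*(t-1) - v) (d+1-1-0)) =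
        ∑ v ∈ Finset.Icc a (j 0 - 1), Nat.choose (n - d*(t-1) - v) d := by
      rw [if_pos rfl]
      norm_num
    rw [hf0]
    have hT : ∀ k ∈ Finset.range d,
        (∑ v ∈ Finset.Icc (if k = 0 then j 0 + t else (fun m => j (m+1)) (k-1) + t)
            ((fun m => j (m+1)) k - 1),
          Nat.choose (n - (d-1-k)*(t-1) - v) (d-1-k)) =
        ∑ v ∈ Finset.Icc (if k+1 = 0 then a else j (k+1-1) + t) (j (k+1) - 1),
          Nat.choose (n - (d+1-1-(k+1))*(t-1) - v) (d+1-1-(k+1)) := by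
      intro k hk
      have e1 : d+1-1-(k+1) = d-1-k := by omega
      rw [e1, if_neg (Nat.succ_ne_zero k)]
      have e2 : k+1-1 = k := rfl
      rw [e2]
      rcases Nat.eq_zero_or_pos k with rfl | hk0
      · rw [if_pos rfl]
      · rw [if_neg (by omega)]
        have e3 : k - 1 + 1 = k := by omega
        simp only []
        rw [e3]
    rw [Finset.sum_congr rfl hT]
    omega

lemma inner_reindex (n t d k b c : ℕ) (ht : 1 ≤ t) (hkd : k < d) :
    ∑ v ∈ Finset.Icc (b + t) (c - 1), Nat.choose (n - (d-1-k)*(t-1) - v) (d-1-k)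
      = ∑ s ∈ Finset.Icc 1 (c - b - t), Nat.choose (n - (d-k)*(t-1) - b - s) (d-1-k) := by
  apply Finset.sum_nbij' (fun v => v - b - t + 1) (fun s => b + t - 1 + s)
  · intro v hv; simp only [Finset.mem_Icc] at *; omega
  · intro s hs; simp only [Finset.mem_Icc] at *; omega
  · intro v hv; simp only [Finset.mem_Icc] at hv; omega
  · intro s hs; simp only [Finset.mem_Icc] at hs; omega
  · intro v hv
    simp only [Finset.mem_Icc] at hv
    have e : d - k = (d-1-k) + 1 := by omega
    rw [e, add_mul, one_mul]
    congr 1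
    generalize (d-1-k)*(t-1) = p
    omega


/-- Counting formula for the initial `t`-lex segment `L_t{u}`:
`|L_t{u}| = Σ_{s=1}^{i_1-1} C(n-(d-1)(t-1)-s, d-1)
  + Σ_{k=2}^{d} Σ_{s=1}^{i_k-i_{k-1}-t} C(n-(d-k+1)(t-1)-i_{k-1}-s, d-k) + 1`. -/
theorem card_tlex_segment (n d t : ℕ) (ht : 1 ≤ t) (hd : 1 ≤ d)
    (hn : 1 + (d - 1) * t ≤ n) (i : Fin d → ℕ) (hi : IsTSpread n t i) :
    Nat.card {w : Fin d → ℕ // IsTSpread n t w ∧ (w = i ∨ SlexGT w i)} =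
      (∑ s ∈ Finset.Icc 1 (i ⟨0, hd⟩ - 1),
          Nat.choose (n - (d - 1) * (t - 1) - s) (d - 1)) +
      (∑ k ∈ Finset.univ.filter (fun k : Fin d => 1 ≤ (k : ℕ)),
          ∑ s ∈ Finset.Icc 1
              (i k - i ⟨(k : ℕ) - 1, lt_of_le_of_lt (Nat.sub_le _ _) k.isLt⟩ - t),
            Nat.choose
              (n - (d - (k : ℕ)) * (t - 1) -
                i ⟨(k : ℕ) - 1, lt_of_le_of_lt (Nat.sub_le _ _) k.isLt⟩ - s)
              (d - 1 - (k : ℕ))) + 1 := by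
  classical
  set j : ℕ → ℕ := fun m => if h : m < d then i ⟨m, h⟩ else 0 with hjdef
  have hij : i = fun k : Fin d => j (k : ℕ) := by
    funext k
    simp only [hjdef, k.isLt, dif_pos]
  have hival : ∀ (m : ℕ) (h : m < d), i ⟨m, h⟩ = j m := by
    intro m h
    simp only [hjdef, h, dif_pos]
  have hTS : TS n t 1 (fun k : Fin d => j (k : ℕ)) := by
    rw [← hij]; exact hi
  have hcard := card_L n t ht d 1 j le_rfl hTS
  have hLHS : Nat.card {w : Fin d → ℕ // IsTSpread n t w ∧ (w = i ∨ SlexGT w i)} =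
      Fc n t d 1 j := by
    rw [← hcard, hij]
    rfl
  rw [hLHS, Fc_closed]
  obtain ⟨d', rfl⟩ : ∃ d', d = d' + 1 := ⟨d - 1, by omega⟩
  congr 1
  rw [Finset.sum_range_succ']
  -- first term of theorem RHS
  have hfirst : (∑ v ∈ Finset.Icc (if 0 = 0 then 1 else j (0-1) + t) (j 0 - 1),
      Nat.choose (n - (d'+1-1-0)*(t-1) - v) (d'+1-1-0)) =
      ∑ s ∈ Finset.Icc 1 (i ⟨0, hd⟩ - 1),
        Nat.choose (n - (d'+1 - 1) * (t - 1) - s) (d'+1 - 1) := by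
    rw [if_pos rfl, hival 0 (by omega)]
    norm_num
  -- filter sum as range sum
  set G : ℕ → ℕ := fun m =>
    if 1 ≤ m then
      ∑ s ∈ Finset.Icc 1 (j m - j (m-1) - t),
        Nat.choose (n - (d'+1 - m) * (t - 1) - j (m-1) - s) (d'+1 - 1 - m)
    else 0 with hG
  have hfilter : (∑ k ∈ Finset.univ.filter (fun k : Fin (d'+1) => 1 ≤ (k : ℕ)),
      ∑ s ∈ Finset.Icc 1
          (i k - i ⟨(k : ℕ) - 1, lt_of_le_of_lt (Nat.sub_le _ _) k.isLt⟩ - t),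
        Nat.choose
          (n - (d'+1 - (k : ℕ)) * (t - 1) -
            i ⟨(k : ℕ) - 1, lt_of_le_of_lt (Nat.sub_le _ _) k.isLt⟩ - s)
          (d'+1 - 1 - (k : ℕ))) = ∑ m ∈ Finset.range (d'+1), G m := by
    rw [Finset.sum_filter, ← Fin.sum_univ_eq_sum_range (fun m => G m)]
    apply Finset.sum_congr rfl
    intro k _
    by_cases hk : 1 ≤ (k : ℕ)
    · rw [if_pos hk, hG]
      simp only [hk, if_pos]
      rw [hival _ k.isLt, hival _ (lt_of_le_of_lt (Nat.sub_le _ _) k.isLt)]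
    · rw [if_neg hk, hG]
      simp only [hk, if_neg, if_false]
  have hG0 : G 0 = 0 := by rw [hG]; simp
  rw [hfilter, hfirst, Finset.sum_range_succ' G d', hG0]
  have hshift : ∀ k ∈ Finset.range d',
      (∑ v ∈ Finset.Icc (if k + 1 = 0 then 1 else j (k+1-1) + t) (j (k+1) - 1),
        Nat.choose (n - (d'+1-1-(k+1))*(t-1) - v) (d'+1-1-(k+1))) = G (k+1) := by
    intro k hk
    simp only [Finset.mem_range] at hk
    have hne : ¬ (k + 1 = 0) := Nat.succ_ne_zero k
    rw [if_neg hne, hG]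
    simp only [le_add_iff_nonneg_left, Nat.zero_le, if_pos]
    have e2 : k + 1 - 1 = k := rfl
    rw [e2]
    exact inner_reindex n t (d'+1) (k+1) (j k) (j (k+1)) ht (by omega)
  rw [Finset.sum_congr rfl hshift]
  omega
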